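/- Let k, r ∈ ℕ, ζ ∈ ℝ with ζ < 0, and let (a₁,a₂,d,b,c) be a P²-ADHM datum at level ζ, regarded as linear maps a₁, a₂ : W₁ → W₀, d : W₀ → W₁, b : ℂ^r → W₀, c : W₁ → ℂ^r, where W₀ = W₁ = ℂ^k. Then there exist no subspaces V₀ ⊆ W₀ and V₁ ⊆ W₁ such that V₁ ≠ 0, dim V₀ = dim V₁, V₁ ⊆ ker c, d(V₀) ⊆ V₁, and aᵢ(V₁) ⊆ V₀ for i = 1, 2 (i.e., the non-degeneracy condition C2' automatically holds when ζ < 0). -/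

import Mathlib

open Matrix

noncomputable section ADHMAux

/-- Squared Frobenius norm of a complex matrix. -/
private def frob {m n : Type*} [Fintype m] [Fintype n] (Y : Matrix m n ℂ) : ℝ :=
  ∑ i, ∑ j, Complex.normSq (Y i j)

private lemma frob_nonneg {m n : Type*} [Fintype m] [Fintype n] (Y : Matrix m n ℂ) :
    0 ≤ frob Y :=
  Finset.sum_nonneg fun _ _ => Finset.sum_nonneg fun _ _ => Complex.normSq_nonneg _

private lemma frob_zero {m n : Type*} [Fintype m] [Fintype n] :
    frob (0 : Matrix m n ℂ) = 0 := by simp [frob]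

private lemma trace_mul_conjTranspose_eq {m n : Type*} [Fintype m] [Fintype n]
    (Y : Matrix m n ℂ) : (Y * Yᴴ).trace = (frob Y : ℂ) := by
  simp [Matrix.trace, Matrix.mul_apply, frob, Matrix.conjTranspose_apply,
    Complex.mul_conj, Matrix.diag]

private lemma frob_unitary_left {m n p : Type*} [Fintype m] [Fintype n] [Fintype p]
    [DecidableEq n] {u : Matrix m n ℂ} (hu : uᴴ * u = 1) (M : Matrix n p ℂ) :
    frob (u * M) = frob M := by
  have key : ((u * M) * (u * M)ᴴ).trace = (M * Mᴴ).trace := by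
    rw [conjTranspose_mul]
    rw [show u * M * (Mᴴ * uᴴ) = u * (M * (Mᴴ * uᴴ)) by rw [Matrix.mul_assoc]]
    rw [Matrix.trace_mul_comm]
    rw [show M * (Mᴴ * uᴴ) * u = (M * Mᴴ) * (uᴴ * u) by
      rw [Matrix.mul_assoc, Matrix.mul_assoc, Matrix.mul_assoc]]
    rw [hu, Matrix.mul_one]
  rw [trace_mul_conjTranspose_eq, trace_mul_conjTranspose_eq] at key
  exact_mod_cast key

private lemma frob_contract {m n p : Type*} [Fintype m] [Fintype n] [Fintype p]
    [DecidableEq n] {u : Matrix m n ℂ} (hu : uᴴ * u = 1) (Y : Matrix p m ℂ) :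
    frob (Y * u) ≤ frob Y := by
  set P : Matrix m m ℂ := u * uᴴ with hPdef
  have hPH : Pᴴ = P := by rw [hPdef, conjTranspose_mul, conjTranspose_conjTranspose]
  have hPP : P * P = P := by
    rw [hPdef, Matrix.mul_assoc, ← Matrix.mul_assoc uᴴ, hu, Matrix.one_mul]
  have h1 : P * (P * Yᴴ) = P * Yᴴ := by rw [← Matrix.mul_assoc, hPP]
  have h2 : u * (uᴴ * Yᴴ) = P * Yᴴ := by rw [hPdef, Matrix.mul_assoc]
  have hid : (Y - Y * P) * (Y - Y * P)ᴴ = Y * Yᴴ - (Y * u) * (Y * u)ᴴ := by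
    simp only [conjTranspose_sub, conjTranspose_mul, hPH, Matrix.sub_mul, Matrix.mul_sub,
      Matrix.mul_assoc, h1, h2]
    abel
  have key : (frob (Y - Y * P) : ℂ) = (frob Y : ℂ) - (frob (Y * u) : ℂ) := by
    rw [← trace_mul_conjTranspose_eq, ← trace_mul_conjTranspose_eq,
      ← trace_mul_conjTranspose_eq, hid, Matrix.trace_sub]
  have keyR : frob (Y - Y * P) = frob Y - frob (Y * u) := by exact_mod_cast key
  have := frob_nonneg (Y - Y * P)
  linarith

private lemma trace_sandwich_mul_conj {m n p : Type*} [Fintype m] [Fintype n] [Fintype p]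
    (u : Matrix m n ℂ) (X : Matrix m p ℂ) :
    (uᴴ * (X * Xᴴ) * u).trace = (frob (uᴴ * X) : ℂ) := by
  have : uᴴ * (X * Xᴴ) * u = (uᴴ * X) * (uᴴ * X)ᴴ := by
    rw [conjTranspose_mul, conjTranspose_conjTranspose, Matrix.mul_assoc,
      Matrix.mul_assoc, Matrix.mul_assoc]
  rw [this, trace_mul_conjTranspose_eq]

private lemma trace_sandwich_conj_mul {m n p : Type*} [Fintype m] [Fintype n] [Fintype p]
    (u : Matrix m n ℂ) (X : Matrix p m ℂ) :
    (uᴴ * (Xᴴ * X) * u).trace = (frob (X * u) : ℂ) := by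
  have : uᴴ * (Xᴴ * X) * u = (X * u)ᴴ * (X * u) := by
    rw [conjTranspose_mul, Matrix.mul_assoc, Matrix.mul_assoc, Matrix.mul_assoc]
  rw [this, Matrix.trace_mul_comm, trace_mul_conjTranspose_eq]

private lemma exists_isometry (k : ℕ) (V : Submodule ℂ (Fin k → ℂ)) :
    ∃ u : Matrix (Fin k) (Fin (Module.finrank ℂ V)) ℂ,
      uᴴ * u = 1 ∧ (∀ j, (fun i => u i j) ∈ V) ∧
      (∀ x ∈ V, ∃ α, u.mulVec α = x) := by
  classical
  set E := EuclideanSpace ℂ (Fin k)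
  let e : (Fin k → ℂ) ≃ₗ[ℂ] E := (WithLp.linearEquiv 2 ℂ (Fin k → ℂ)).symm
  let V' : Submodule ℂ E := V.map e.toLinearMap
  have hfr : Module.finrank ℂ V' = Module.finrank ℂ V := LinearEquiv.finrank_map_eq e V
  let b0 := stdOrthonormalBasis ℂ V'
  let b : OrthonormalBasis (Fin (Module.finrank ℂ V)) ℂ V' := b0.reindex (finCongr hfr)
  have hON : Orthonormal ℂ (fun j => ((b j : E))) :=
    b.orthonormal.comp_linearIsometry V'.subtypeₗᵢ
  refine ⟨fun i j => (b j : E) i, ?_, ?_, ?_⟩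
  · ext j j'
    have h1 := (orthonormal_iff_ite.mp hON) j j'
    simp only [E, PiLp.inner_apply, RCLike.inner_apply] at h1
    show ∑ l, star ((b j : E) l) * (b j' : E) l = (1 : Matrix (Fin (Module.finrank ℂ V)) (Fin (Module.finrank ℂ V)) ℂ) j j'
    rw [Matrix.one_apply, ← h1]
    simp [mul_comm]
  · intro j
    obtain ⟨y, hy, hey⟩ := (b j).2
    have : (fun i => (b j : E) i) = y := by
      funext i; rw [← hey]; rfl
    rwa [this]
  · intro x hx
    have hx' : e x ∈ V' := ⟨x, hx, rfl⟩
    have hs := b.sum_repr ⟨e x, hx'⟩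
    refine ⟨fun j => b.repr ⟨e x, hx'⟩ j, ?_⟩
    funext i
    have hcoe : ∑ j, (b.repr ⟨e x, hx'⟩ j : ℂ) • ((b j : E)) = e x := by
      simpa using congrArg Subtype.val hs
    have hx2 : ∑ j, (b.repr ⟨e x, hx'⟩ j : ℂ) • (e.symm ((b j : E))) = x := by
      have h2 := congrArg e.symm hcoe
      simpa [map_sum, _root_.map_smul] using h2
    simp only [Matrix.mulVec, dotProduct]
    rw [← congrFun hx2 i]
    simp only [Finset.sum_apply, Pi.smul_apply, smul_eq_mul]
    refine Finset.sum_congr rfl fun j _ => ?_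
    rw [mul_comm]
    rfl

private lemma col_mul {k m p : ℕ} (A : Matrix (Fin k) (Fin m) ℂ) (B : Matrix (Fin m) (Fin p) ℂ)
    (j : Fin p) : (fun i => (A * B) i j) = A.mulVec (fun l => B l j) := by
  funext i; simp [Matrix.mul_apply, Matrix.mulVec, dotProduct]

private lemma fix_cols {k n m : ℕ} {V : Submodule ℂ (Fin k → ℂ)}
    (u : Matrix (Fin k) (Fin n) ℂ) (hu : uᴴ * u = 1)
    (hspan : ∀ x ∈ V, ∃ α : Fin n → ℂ, u.mulVec α = x)
    (M : Matrix (Fin k) (Fin m) ℂ) (hM : ∀ j, (fun i => M i j) ∈ V) :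
    u * (uᴴ * M) = M := by
  choose α hα using fun j => hspan _ (hM j)
  have hMeq : M = u * (Matrix.of fun p j => α j p) := by
    ext i j
    have := congrFun (hα j) i
    simp only [Matrix.mulVec, dotProduct] at this
    simp [Matrix.mul_apply, ← this]
  rw [hMeq, ← Matrix.mul_assoc uᴴ u, hu, Matrix.one_mul]

end ADHMAux

/-- A P²-ADHM datum at level `ζ`. -/
def IsP2ADHM {k r : ℕ} (ζ : ℝ)
    (a₁ a₂ d : Matrix (Fin k) (Fin k) ℂ)
    (b : Matrix (Fin k) (Fin r) ℂ)
    (c : Matrix (Fin r) (Fin k) ℂ) : Prop :=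
  a₁ * d * a₂ - a₂ * d * a₁ + b * c = 0 ∧
  a₁ * a₁ᴴ + a₂ * a₂ᴴ + b * bᴴ = 1 ∧
  d * a₁ * (d * a₁)ᴴ - (d * a₁)ᴴ * (d * a₁) + d * a₂ * (d * a₂)ᴴ - (d * a₂)ᴴ * (d * a₂)
      - a₁ᴴ * a₁ - a₂ᴴ * a₂ + d * b * (d * b)ᴴ - cᴴ * c + 1
    = (ζ : ℂ) • (1 : Matrix (Fin k) (Fin k) ℂ)

/-- For a P²-ADHM datum at level `ζ < 0`, the non-degeneracy condition C2'
automatically holds: there are no subspaces `V₀ ⊆ W₀ = ℂᵏ` and `0 ≠ V₁ ⊆ W₁ = ℂᵏ`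
with `dim V₀ = dim V₁`, `V₁ ⊆ ker c`, `d(V₀) ⊆ V₁`, `aᵢ(V₁) ⊆ V₀`. -/
theorem stmt4 (k r : ℕ) (ζ : ℝ) (hζ : ζ < 0)
    (a₁ a₂ d : Matrix (Fin k) (Fin k) ℂ)
    (b : Matrix (Fin k) (Fin r) ℂ) (c : Matrix (Fin r) (Fin k) ℂ)
    (h : IsP2ADHM ζ a₁ a₂ d b c) :
    ¬ ∃ (V₀ V₁ : Submodule ℂ (Fin k → ℂ)),
        V₁ ≠ ⊥ ∧
        Module.finrank ℂ V₀ = Module.finrank ℂ V₁ ∧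
        V₁ ≤ LinearMap.ker c.mulVecLin ∧
        V₀.map d.mulVecLin ≤ V₁ ∧
        V₁.map a₁.mulVecLin ≤ V₀ ∧
        V₁.map a₂.mulVecLin ≤ V₀ := by
  rintro ⟨V₀, V₁, hne, hrank, hker, hd, ha1, ha2⟩
  obtain ⟨u, hu, humem, huspan⟩ := exists_isometry k V₁
  obtain ⟨v, hv, hvmem, hvspan⟩ := exists_isometry k V₀
  -- memberships of columns
  have hcolsa : ∀ (a : Matrix (Fin k) (Fin k) ℂ), V₁.map a.mulVecLin ≤ V₀ →
      ∀ j, (fun i => (a * u) i j) ∈ V₀ := by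
    intro a ha j
    rw [col_mul]
    exact ha ⟨_, humem j, by rw [Matrix.mulVecLin_apply]⟩
  have hcolsda : ∀ (a : Matrix (Fin k) (Fin k) ℂ), V₁.map a.mulVecLin ≤ V₀ →
      ∀ j, (fun i => (d * a * u) i j) ∈ V₁ := by
    intro a ha j
    have hc : (fun i => (d * a * u) i j) = d.mulVec (fun l => (a * u) l j) := by
      rw [Matrix.mul_assoc d a u]
      exact col_mul d (a * u) j
    rw [hc]
    exact hd ⟨_, hcolsa a ha j, by rw [Matrix.mulVecLin_apply]⟩
  -- fixed-point identities
  have hfix1 : u * (uᴴ * (d * a₁ * u)) = d * a₁ * u :=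
    fix_cols u hu huspan _ (hcolsda a₁ ha1)
  have hfix2 : u * (uᴴ * (d * a₂ * u)) = d * a₂ * u :=
    fix_cols u hu huspan _ (hcolsda a₂ ha2)
  have hfixa1 : v * (vᴴ * (a₁ * u)) = a₁ * u :=
    fix_cols v hv hvspan _ (hcolsa a₁ ha1)
  have hfixa2 : v * (vᴴ * (a₂ * u)) = a₂ * u :=
    fix_cols v hv hvspan _ (hcolsa a₂ ha2)
  -- c * u = 0
  have hcu : c * u = 0 := by
    ext i j
    have hmem := hker (humem j)
    rw [LinearMap.mem_ker] at hmem
    have h0 : (fun i => (c * u) i j) = c.mulVecLin (fun l => u l j) := by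
      rw [Matrix.mulVecLin_apply]
      exact col_mul c u j
    have h1 := congrFun h0 i
    rw [hmem] at h1
    simpa using h1
  -- trace of equation (ii) sandwiched by v
  obtain ⟨-, h2, h3⟩ := h
  have eqC2 : (frob (vᴴ * a₁) : ℂ) + (frob (vᴴ * a₂) : ℂ) + (frob (vᴴ * b) : ℂ) = ((Module.finrank ℂ V₀ : ℕ) : ℂ) := by
    have := congrArg (fun M => (vᴴ * M * v).trace) h2
    simp only [Matrix.mul_add, Matrix.add_mul, Matrix.trace_add] at this
    rw [trace_sandwich_mul_conj v a₁, trace_sandwich_mul_conj v a₂,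
      trace_sandwich_mul_conj v b] at this
    rw [Matrix.mul_one, hv, Matrix.trace_one] at this
    simpa using this
  have eqR2 : frob (vᴴ * a₁) + frob (vᴴ * a₂) + frob (vᴴ * b) = ((Module.finrank ℂ V₀ : ℕ) : ℝ) := by
    exact_mod_cast eqC2
  -- trace of equation (iii) sandwiched by u
  have eqC3 : (frob (uᴴ * (d * a₁)) : ℂ) - (frob ((d * a₁) * u) : ℂ)
      + (frob (uᴴ * (d * a₂)) : ℂ) - (frob ((d * a₂) * u) : ℂ)
      - (frob (a₁ * u) : ℂ) - (frob (a₂ * u) : ℂ)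
      + (frob (uᴴ * (d * b)) : ℂ) - (frob (c * u) : ℂ) + ((Module.finrank ℂ V₁ : ℕ) : ℂ)
      = (ζ : ℂ) * ((Module.finrank ℂ V₁ : ℕ) : ℂ) := by
    have := congrArg (fun M => (uᴴ * M * u).trace) h3
    simp only [Matrix.mul_add, Matrix.add_mul, Matrix.mul_sub, Matrix.sub_mul,
      Matrix.trace_add, Matrix.trace_sub] at this
    rw [trace_sandwich_mul_conj u (d * a₁), trace_sandwich_conj_mul u (d * a₁),
      trace_sandwich_mul_conj u (d * a₂), trace_sandwich_conj_mul u (d * a₂),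
      trace_sandwich_conj_mul u a₁, trace_sandwich_conj_mul u a₂,
      trace_sandwich_mul_conj u (d * b), trace_sandwich_conj_mul u c] at this
    rw [Matrix.mul_one, hu, Matrix.trace_one] at this
    rw [show uᴴ * ((ζ : ℂ) • (1 : Matrix (Fin k) (Fin k) ℂ)) * u
        = (ζ : ℂ) • (uᴴ * (1 : Matrix (Fin k) (Fin k) ℂ) * u) by
      rw [Matrix.mul_smul, Matrix.smul_mul]] at this
    rw [Matrix.mul_one, hu, Matrix.trace_smul, Matrix.trace_one] at this
    simpa [Fintype.card_fin, smul_eq_mul] using this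
  have eqR3 : frob (uᴴ * (d * a₁)) - frob ((d * a₁) * u)
      + frob (uᴴ * (d * a₂)) - frob ((d * a₂) * u)
      - frob (a₁ * u) - frob (a₂ * u)
      + frob (uᴴ * (d * b)) - frob (c * u) + ((Module.finrank ℂ V₁ : ℕ) : ℝ) = ζ * ((Module.finrank ℂ V₁ : ℕ) : ℝ) := by
    exact_mod_cast eqC3
  -- inequalities
  have hda1 : frob ((d * a₁) * u) ≤ frob (uᴴ * (d * a₁)) := by
    calc frob ((d * a₁) * u) = frob (uᴴ * (d * a₁ * u)) := by
          rw [← frob_unitary_left hu (uᴴ * (d * a₁ * u)), hfix1]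
      _ = frob ((uᴴ * (d * a₁)) * u) := by rw [Matrix.mul_assoc uᴴ (d * a₁) u]
      _ ≤ frob (uᴴ * (d * a₁)) := frob_contract hu _
  have hda2 : frob ((d * a₂) * u) ≤ frob (uᴴ * (d * a₂)) := by
    calc frob ((d * a₂) * u) = frob (uᴴ * (d * a₂ * u)) := by
          rw [← frob_unitary_left hu (uᴴ * (d * a₂ * u)), hfix2]
      _ = frob ((uᴴ * (d * a₂)) * u) := by rw [Matrix.mul_assoc uᴴ (d * a₂) u]
      _ ≤ frob (uᴴ * (d * a₂)) := frob_contract hu _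
  have ha1u : frob (a₁ * u) ≤ frob (vᴴ * a₁) := by
    calc frob (a₁ * u) = frob (vᴴ * (a₁ * u)) := by
          rw [← frob_unitary_left hv (vᴴ * (a₁ * u)), hfixa1]
      _ = frob ((vᴴ * a₁) * u) := by rw [Matrix.mul_assoc vᴴ a₁ u]
      _ ≤ frob (vᴴ * a₁) := frob_contract hu _
  have ha2u : frob (a₂ * u) ≤ frob (vᴴ * a₂) := by
    calc frob (a₂ * u) = frob (vᴴ * (a₂ * u)) := by
          rw [← frob_unitary_left hv (vᴴ * (a₂ * u)), hfixa2]
      _ = frob ((vᴴ * a₂) * u) := by rw [Matrix.mul_assoc vᴴ a₂ u]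
      _ ≤ frob (vᴴ * a₂) := frob_contract hu _
  have hcu0 : frob (c * u) = 0 := by rw [hcu, frob_zero]
  -- n₁ ≥ 1
  have hn1pos : 0 < Module.finrank ℂ V₁ := by
    haveI : Nontrivial V₁ := Submodule.nontrivial_iff_ne_bot.mpr hne
    exact Module.finrank_pos_iff.mpr this
  have hnn : ((Module.finrank ℂ V₀ : ℕ) : ℝ) = ((Module.finrank ℂ V₁ : ℕ) : ℝ) := by exact_mod_cast congrArg (Nat.cast : ℕ → ℝ) hrank
  have hvb := frob_nonneg (vᴴ * b)
  have hdb := frob_nonneg (uᴴ * (d * b))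
  have hzn : ζ * ((Module.finrank ℂ V₁ : ℕ) : ℝ) < 0 := by
    apply mul_neg_of_neg_of_pos hζ
    exact_mod_cast hn1pos
  linarith
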